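/- The function h(θ) := θ·H↑_{1+θ}(X|Y) = −(1+θ) log Σ_y [Σ_x P_XY(x,y)^{1+θ}]^{1/(1+θ)}, extended by h(0)=0, is concave on (−1,∞), and it is strictly concave on (−1,∞) if and only if V(X|Y) > 0. -/

import Mathlib

open Real Filter

/-- Marginal distribution on `𝒴`. -/
noncomputable def margY {𝒳 𝒴 : Type*} [Fintype 𝒳] (P : 𝒳 × 𝒴 → ℝ) (y : 𝒴) : ℝ :=
  ∑ x : 𝒳, P (x, y)

/-- `θ · H↑_{1+θ}(X|Y) = -(1+θ) log Σ_y [Σ_x P(x,y)^{1+θ}]^{1/(1+θ)}`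
(which equals `0` at `θ = 0`). -/
noncomputable def thetaCondRenyiUp {𝒳 𝒴 : Type*} [Fintype 𝒳] [Fintype 𝒴]
    (P : 𝒳 × 𝒴 → ℝ) (θ : ℝ) : ℝ :=
  -(1 + θ) * Real.log (∑ y : 𝒴, (∑ x : 𝒳, P (x, y) ^ (1 + θ)) ^ (1 / (1 + θ)))

/-- Conditional entropy `H(X|Y)`. -/
noncomputable def condEnt {𝒳 𝒴 : Type*} [Fintype 𝒳] [Fintype 𝒴]
    (P : 𝒳 × 𝒴 → ℝ) : ℝ :=
  -∑ x : 𝒳, ∑ y : 𝒴,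
    if 0 < P (x, y) then P (x, y) * Real.log (P (x, y) / margY P y) else 0

/-- Conditional varentropy `V(X|Y)`. -/
noncomputable def condVarEnt {𝒳 𝒴 : Type*} [Fintype 𝒳] [Fintype 𝒴]
    (P : 𝒳 × 𝒴 → ℝ) : ℝ :=
  (∑ x : 𝒳, ∑ y : 𝒴,
    if 0 < P (x, y) then P (x, y) * (Real.log (P (x, y) / margY P y)) ^ 2 else 0)
  - (condEnt P) ^ 2

lemma gibbs_key {ι : Type*} {s : Finset ι} {q p : ι → ℝ}
    (hq : ∀ i ∈ s, 0 < q i) (hp : ∀ i ∈ s, 0 < p i) (hq1 : ∑ i ∈ s, q i = 1) :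
    (∀ i ∈ s, q i * Real.log (p i / q i) ≤
      p i / (∑ j ∈ s, p j) - q i + q i * Real.log (∑ j ∈ s, p j)) ∧
    (∑ i ∈ s, (p i / (∑ j ∈ s, p j) - q i + q i * Real.log (∑ j ∈ s, p j)))
      = Real.log (∑ j ∈ s, p j) := by
  have hs : s.Nonempty := by
    rcases s.eq_empty_or_nonempty with h | h
    · exfalso; rw [h] at hq1; simp at hq1
    · exact h
  have hS : 0 < ∑ j ∈ s, p j := Finset.sum_pos hp hs
  constructor
  · intro i hi
    have hqi := hq i hi; have hpi := hp i hi
    have h1 : Real.log (p i / (q i * (∑ j ∈ s, p j))) ≤ p i / (q i * (∑ j ∈ s, p j)) - 1 :=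
      Real.log_le_sub_one_of_pos (by positivity)
    have h2 : Real.log (p i / q i) =
        Real.log (p i / (q i * (∑ j ∈ s, p j))) + Real.log (∑ j ∈ s, p j) := by
      rw [← Real.log_mul (by positivity) hS.ne']
      congr 1
      field_simp
    have h3 := mul_le_mul_of_nonneg_left h1 hqi.le
    have h4 : q i * (p i / (q i * (∑ j ∈ s, p j)) - 1) = p i / (∑ j ∈ s, p j) - q i := by
      field_simp
    calc q i * Real.log (p i / q i)
        = q i * Real.log (p i / (q i * (∑ j ∈ s, p j))) + q i * Real.log (∑ j ∈ s, p j) := by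
          rw [h2]; ring
      _ ≤ q i * (p i / (q i * (∑ j ∈ s, p j)) - 1) + q i * Real.log (∑ j ∈ s, p j) := by
          linarith
      _ = p i / (∑ j ∈ s, p j) - q i + q i * Real.log (∑ j ∈ s, p j) := by rw [h4]
  · rw [Finset.sum_add_distrib, Finset.sum_sub_distrib, ← Finset.sum_div, ← Finset.sum_mul,
      hq1, div_self hS.ne']
    ring

lemma gibbs_le {ι : Type*} {s : Finset ι} {q p : ι → ℝ}
    (hq : ∀ i ∈ s, 0 < q i) (hp : ∀ i ∈ s, 0 < p i) (hq1 : ∑ i ∈ s, q i = 1) :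
    ∑ i ∈ s, q i * Real.log (p i / q i) ≤ Real.log (∑ j ∈ s, p j) := by
  obtain ⟨h1, h2⟩ := gibbs_key hq hp hq1
  calc ∑ i ∈ s, q i * Real.log (p i / q i)
      ≤ ∑ i ∈ s, (p i / (∑ j ∈ s, p j) - q i + q i * Real.log (∑ j ∈ s, p j)) :=
        Finset.sum_le_sum h1
    _ = Real.log (∑ j ∈ s, p j) := h2

lemma gibbs_eq {ι : Type*} {s : Finset ι} {q p : ι → ℝ}
    (hq : ∀ i ∈ s, 0 < q i) (hp : ∀ i ∈ s, 0 < p i) (hq1 : ∑ i ∈ s, q i = 1)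
    (heq : ∑ i ∈ s, q i * Real.log (p i / q i) = Real.log (∑ j ∈ s, p j)) :
    ∀ i ∈ s, p i = q i * ∑ j ∈ s, p j := by
  obtain ⟨h1, h2⟩ := gibbs_key hq hp hq1
  have hterm : ∀ i ∈ s, q i * Real.log (p i / q i) =
      p i / (∑ j ∈ s, p j) - q i + q i * Real.log (∑ j ∈ s, p j) := by
    rw [← Finset.sum_eq_sum_iff_of_le h1]
    rw [heq, h2]
  intro i hi
  have hs : s.Nonempty := ⟨i, hi⟩
  have hS : 0 < ∑ j ∈ s, p j := Finset.sum_pos hp hs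
  have hqi := hq i hi; have hpi := hp i hi
  -- from termwise equality derive p i = q i * S
  have h2' : Real.log (p i / q i) =
      Real.log (p i / (q i * (∑ j ∈ s, p j))) + Real.log (∑ j ∈ s, p j) := by
    rw [← Real.log_mul (by positivity) hS.ne']
    congr 1; field_simp
  have := hterm i hi
  rw [h2'] at this
  have h5 : q i * Real.log (p i / (q i * (∑ j ∈ s, p j)))
      = p i / (∑ j ∈ s, p j) - q i := by nlinarith [this]
  by_contra hne
  have ht : p i / (q i * (∑ j ∈ s, p j)) ≠ 1 := by
    intro h
    apply hne
    field_simp at h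
    linarith
  have hlt : Real.log (p i / (q i * (∑ j ∈ s, p j))) <
      p i / (q i * (∑ j ∈ s, p j)) - 1 :=
    Real.log_lt_sub_one_of_pos (by positivity) ht
  have h6 : q i * (p i / (q i * (∑ j ∈ s, p j)) - 1) = p i / (∑ j ∈ s, p j) - q i := by
    field_simp
  nlinarith [mul_lt_mul_of_pos_left hlt hqi]

section Aux
set_option linter.unusedSectionVars false

open Real Finset

variable {𝒳 𝒴 : Type*} [Fintype 𝒳] [Fintype 𝒴]

/-- Inner sum `A_y(σ) = Σ_x P(x,y)^{1+σ}`. -/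
noncomputable def AA (P : 𝒳 × 𝒴 → ℝ) (σ : ℝ) (y : 𝒴) : ℝ := ∑ x : 𝒳, P (x, y) ^ (1 + σ)

/-- Outer sum `f(σ) = Σ_y A_y(σ)^{1/(1+σ)}`. -/
noncomputable def FF (P : 𝒳 × 𝒴 → ℝ) (σ : ℝ) : ℝ := ∑ y : 𝒴, AA P σ y ^ (1 / (1 + σ))

lemma theta_eq (P : 𝒳 × 𝒴 → ℝ) (σ : ℝ) :
    thetaCondRenyiUp P σ = -(1 + σ) * Real.log (FF P σ) := rfl

/-- support of `P` -/
noncomputable def TS (P : 𝒳 × 𝒴 → ℝ) : Finset (𝒳 × 𝒴) :=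
  Finset.univ.filter (fun p => 0 < P p)

/-- support of the marginal -/
noncomputable def TY (P : 𝒳 × 𝒴 → ℝ) : Finset 𝒴 :=
  Finset.univ.filter (fun y => 0 < margY P y)

/-- support of `P (·, y)` -/
noncomputable def SX (P : 𝒳 × 𝒴 → ℝ) (y : 𝒴) : Finset 𝒳 :=
  Finset.univ.filter (fun x => 0 < P (x, y))

/-- tilted marginal -/
noncomputable def WYt (P : 𝒳 × 𝒴 → ℝ) (σ : ℝ) (y : 𝒴) : ℝ :=
  AA P σ y ^ (1 / (1 + σ)) / FF P σ

/-- tilted joint distribution -/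
noncomputable def Wt (P : 𝒳 × 𝒴 → ℝ) (σ : ℝ) (p : 𝒳 × 𝒴) : ℝ :=
  P p ^ (1 + σ) * AA P σ p.2 ^ (1 / (1 + σ) - 1) / FF P σ

/-- slope of the supporting line of `θ ↦ θ H↑_{1+θ}` at `σ` -/
noncomputable def slopeR (P : 𝒳 × 𝒴 → ℝ) (σ : ℝ) : ℝ :=
  -(∑ p ∈ TS P, Wt P σ p * Real.log (P p))
  + ∑ y ∈ TY P, WYt P σ y * Real.log (WYt P σ y)

variable {P : 𝒳 × 𝒴 → ℝ}

lemma marg_pos (hP0 : ∀ p, 0 ≤ P p) {x : 𝒳} {y : 𝒴} (h : 0 < P (x, y)) :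
    0 < margY P y :=
  Finset.sum_pos' (fun x _ => hP0 (x, y)) ⟨x, Finset.mem_univ _, h⟩

lemma exists_pos_of_marg {y : 𝒴} (h : 0 < margY P y) : ∃ x, 0 < P (x, y) := by
  obtain ⟨x, -, hx⟩ := Finset.exists_lt_of_sum_lt
    (show ∑ x : 𝒳, (0 : ℝ) < ∑ x : 𝒳, P (x, y) by simpa [margY] using h)
  exact ⟨x, hx⟩

lemma P_eq_zero (hP0 : ∀ p, 0 ≤ P p) {p : 𝒳 × 𝒴} (h : ¬ 0 < P p) : P p = 0 :=
  le_antisymm (not_lt.1 h) (hP0 p)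

lemma P_eq_zero_of_marg (hP0 : ∀ p, 0 ≤ P p) {x : 𝒳} {y : 𝒴}
    (h : ¬ 0 < margY P y) : P (x, y) = 0 :=
  P_eq_zero hP0 (fun hc => h (marg_pos hP0 hc))

lemma AA_sum_filter (hP0 : ∀ p, 0 ≤ P p) {σ : ℝ} (hσ : 0 < 1 + σ) (y : 𝒴) :
    ∑ x ∈ SX P y, P (x, y) ^ (1 + σ) = AA P σ y := by
  refine Finset.sum_subset (Finset.filter_subset _ _) (fun x _ hx => ?_)
  rw [SX, Finset.mem_filter] at hx
  rw [P_eq_zero hP0 (fun hc => hx ⟨Finset.mem_univ _, hc⟩), Real.zero_rpow hσ.ne']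

lemma AA_nonneg (hP0 : ∀ p, 0 ≤ P p) (σ : ℝ) (y : 𝒴) : 0 ≤ AA P σ y :=
  Finset.sum_nonneg (fun x _ => Real.rpow_nonneg (hP0 _) _)

lemma AA_pos (hP0 : ∀ p, 0 ≤ P p) {σ : ℝ} {y : 𝒴} (h : 0 < margY P y) :
    0 < AA P σ y := by
  obtain ⟨x, hx⟩ := exists_pos_of_marg h
  exact Finset.sum_pos' (fun x _ => Real.rpow_nonneg (hP0 _) _)
    ⟨x, Finset.mem_univ _, Real.rpow_pos_of_pos hx _⟩

lemma AA_eq_zero (hP0 : ∀ p, 0 ≤ P p) {σ : ℝ} (hσ : 0 < 1 + σ) {y : 𝒴}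
    (h : ¬ 0 < margY P y) : AA P σ y = 0 := by
  rw [AA]
  refine Finset.sum_eq_zero (fun x _ => ?_)
  rw [P_eq_zero_of_marg hP0 h, Real.zero_rpow hσ.ne']

lemma FF_sum_filter (hP0 : ∀ p, 0 ≤ P p) {σ : ℝ} (hσ : 0 < 1 + σ) :
    ∑ y ∈ TY P, AA P σ y ^ (1 / (1 + σ)) = FF P σ := by
  refine Finset.sum_subset (Finset.filter_subset _ _) (fun y _ hy => ?_)
  rw [TY, Finset.mem_filter] at hy
  rw [AA_eq_zero hP0 hσ (fun hc => hy ⟨Finset.mem_univ _, hc⟩),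
    Real.zero_rpow (by positivity)]

lemma marg_sum : ∑ y : 𝒴, margY P y = ∑ p : 𝒳 × 𝒴, P p := by
  rw [show (∑ p : 𝒳 × 𝒴, P p) = ∑ x : 𝒳, ∑ y : 𝒴, P (x, y) from
    Fintype.sum_prod_type (f := fun p => P p), Finset.sum_comm]
  rfl

lemma exists_marg_pos (hP1 : ∑ p : 𝒳 × 𝒴, P p = 1) : ∃ y, 0 < margY P y := by
  obtain ⟨y, -, hy⟩ := Finset.exists_lt_of_sum_lt
    (show ∑ y : 𝒴, (0 : ℝ) < ∑ y : 𝒴, margY P y by rw [marg_sum, hP1]; simp)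
  exact ⟨y, hy⟩

lemma FF_pos (hP0 : ∀ p, 0 ≤ P p) (hP1 : ∑ p : 𝒳 × 𝒴, P p = 1) {σ : ℝ}
    (hσ : 0 < 1 + σ) : 0 < FF P σ := by
  obtain ⟨y, hy⟩ := exists_marg_pos hP1
  exact Finset.sum_pos' (fun y _ => Real.rpow_nonneg (AA_nonneg hP0 _ _) _)
    ⟨y, Finset.mem_univ _, Real.rpow_pos_of_pos (AA_pos hP0 hy) _⟩

lemma WYt_pos (hP0 : ∀ p, 0 ≤ P p) (hP1 : ∑ p : 𝒳 × 𝒴, P p = 1) {σ : ℝ}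
    (hσ : 0 < 1 + σ) {y : 𝒴} (h : 0 < margY P y) : 0 < WYt P σ y :=
  div_pos (Real.rpow_pos_of_pos (AA_pos hP0 h) _) (FF_pos hP0 hP1 hσ)

lemma sum_WYt (hP0 : ∀ p, 0 ≤ P p) (hP1 : ∑ p : 𝒳 × 𝒴, P p = 1) {σ : ℝ}
    (hσ : 0 < 1 + σ) : ∑ y ∈ TY P, WYt P σ y = 1 := by
  simp only [WYt]
  rw [← Finset.sum_div, FF_sum_filter hP0 hσ, div_self (FF_pos hP0 hP1 hσ).ne']

lemma Wt_eq (hP0 : ∀ p, 0 ≤ P p) {σ : ℝ} {x : 𝒳} {y : 𝒴}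
    (h : 0 < margY P y) :
    Wt P σ (x, y) = WYt P σ y * (P (x, y) ^ (1 + σ) / AA P σ y) := by
  have hA : 0 < AA P σ y := AA_pos hP0 h
  rw [Wt, WYt]
  rw [show (1 / (1 + σ) - 1 : ℝ) = 1 / (1 + σ) - 1 from rfl,
    Real.rpow_sub hA, Real.rpow_one]
  field_simp

lemma sum_T_split (hP0 : ∀ p, 0 ≤ P p) (f : 𝒳 × 𝒴 → ℝ) :
    ∑ p ∈ TS P, f p = ∑ y ∈ TY P, ∑ x ∈ SX P y, f (x, y) := by
  have h1 : ∑ p ∈ TS P, f p = ∑ y : 𝒴, ∑ x ∈ SX P y, f (x, y) := by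
    calc ∑ p ∈ TS P, f p = ∑ p : 𝒳 × 𝒴, if 0 < P p then f p else 0 :=
          Finset.sum_filter _ _
      _ = ∑ x : 𝒳, ∑ y : 𝒴, if 0 < P (x, y) then f (x, y) else 0 :=
          Fintype.sum_prod_type _
      _ = ∑ y : 𝒴, ∑ x : 𝒳, if 0 < P (x, y) then f (x, y) else 0 := Finset.sum_comm
      _ = ∑ y : 𝒴, ∑ x ∈ SX P y, f (x, y) := by
          refine Finset.sum_congr rfl (fun y _ => ?_)
          rw [SX, Finset.sum_filter]
  rw [h1]
  refine (Finset.sum_subset (Finset.filter_subset _ _) (fun y _ hy => ?_)).symm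
  simp only [TY, Finset.mem_filter] at hy
  refine Finset.sum_eq_zero (fun x hx => ?_)
  rw [SX, Finset.mem_filter] at hx
  exact absurd (marg_pos hP0 hx.2) (fun hc => hy ⟨Finset.mem_univ _, hc⟩)

end Aux

section Supp
set_option linter.unusedSectionVars false
set_option maxHeartbeats 1000000

open Real Finset

variable {𝒳 𝒴 : Type*} [Fintype 𝒳] [Fintype 𝒴] {P : 𝒳 × 𝒴 → ℝ}

lemma support_line (hP0 : ∀ p, 0 ≤ P p) (hP1 : ∑ p : 𝒳 × 𝒴, P p = 1)
    {σ τ : ℝ} (hσ : -1 < σ) (hτ : -1 < τ) :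
    thetaCondRenyiUp P τ ≤ thetaCondRenyiUp P σ + (τ - σ) * slopeR P σ ∧
    (thetaCondRenyiUp P τ = thetaCondRenyiUp P σ + (τ - σ) * slopeR P σ →
      (∀ x y, 0 < P (x, y) →
        P (x, y) ^ (1 + τ) = P (x, y) ^ (1 + σ) / AA P σ y * AA P τ y) ∧
      ∀ y, 0 < margY P y → AA P τ y ^ (1 / (1 + τ)) = WYt P σ y * FF P τ) := by
  have h1σ : (0:ℝ) < 1 + σ := by linarith
  have h1τ : (0:ℝ) < 1 + τ := by linarith
  have hFσ : 0 < FF P σ := FF_pos hP0 hP1 h1σ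
  have hFτ : 0 < FF P τ := FF_pos hP0 hP1 h1τ
  -- inner Gibbs setup
  set q : 𝒴 → 𝒳 → ℝ := fun y x => P (x, y) ^ (1 + σ) / AA P σ y with hq_def
  have hmemSX : ∀ {x y}, x ∈ SX P y ↔ 0 < P (x, y) := by
    intro x y; simp [SX]
  have hmemTY : ∀ {y}, y ∈ TY P ↔ 0 < margY P y := by
    intro y; simp [TY]
  have hq_pos : ∀ y ∈ TY P, ∀ x ∈ SX P y, 0 < q y x := fun y hy x hx =>
    div_pos (Real.rpow_pos_of_pos (hmemSX.1 hx) _) (AA_pos hP0 (hmemTY.1 hy))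
  have hp_pos : ∀ y, ∀ x ∈ SX P y, 0 < P (x, y) ^ (1 + τ) := fun y x hx =>
    Real.rpow_pos_of_pos (hmemSX.1 hx) _
  have hq_sum : ∀ y ∈ TY P, ∑ x ∈ SX P y, q y x = 1 := by
    intro y hy
    simp only [hq_def]
    rw [← Finset.sum_div, AA_sum_filter hP0 h1σ, div_self (AA_pos hP0 (hmemTY.1 hy)).ne']
  have hsumpτ : ∀ y, ∑ x ∈ SX P y, P (x, y) ^ (1 + τ) = AA P τ y :=
    fun y => AA_sum_filter hP0 h1τ y
  -- rewrite of inner Gibbs LHS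
  set QL : 𝒴 → ℝ := fun y => ∑ x ∈ SX P y, q y x * Real.log (P (x, y)) with hQL_def
  have hinner_rw : ∀ y ∈ TY P,
      ∑ x ∈ SX P y, q y x * Real.log (P (x, y) ^ (1 + τ) / q y x)
        = (τ - σ) * QL y + Real.log (AA P σ y) := by
    intro y hy
    have hA : 0 < AA P σ y := AA_pos hP0 (hmemTY.1 hy)
    have : ∀ x ∈ SX P y, q y x * Real.log (P (x, y) ^ (1 + τ) / q y x)
        = (τ - σ) * (q y x * Real.log (P (x, y))) + q y x * Real.log (AA P σ y) := by
      intro x hx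
      have hx' : 0 < P (x, y) := hmemSX.1 hx
      have hqx : 0 < q y x := hq_pos y hy x hx
      rw [Real.log_div (Real.rpow_pos_of_pos hx' _).ne' hqx.ne']
      simp only [hq_def]
      rw [Real.log_div (Real.rpow_pos_of_pos hx' _).ne' hA.ne',
        Real.log_rpow hx', Real.log_rpow hx']
      ring
    rw [Finset.sum_congr rfl this, Finset.sum_add_distrib, ← Finset.mul_sum,
      ← Finset.sum_mul, hq_sum y hy, one_mul]
  -- inner Gibbs inequality, rewritten
  have hinner_le : ∀ y ∈ TY P,
      (τ - σ) * QL y + Real.log (AA P σ y) ≤ Real.log (AA P τ y) := by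
    intro y hy
    rw [← hinner_rw y hy, ← hsumpτ y]
    exact gibbs_le (hq_pos y hy) (hp_pos y) (hq_sum y hy)
  -- outer Gibbs
  have hqY_pos : ∀ y ∈ TY P, 0 < WYt P σ y := fun y hy =>
    WYt_pos hP0 hP1 h1σ (hmemTY.1 hy)
  have hpY_pos : ∀ y ∈ TY P, 0 < AA P τ y ^ (1 / (1 + τ)) := fun y hy =>
    Real.rpow_pos_of_pos (AA_pos hP0 (hmemTY.1 hy)) _
  have hsumFτ : ∑ y ∈ TY P, AA P τ y ^ (1 / (1 + τ)) = FF P τ :=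
    FF_sum_filter hP0 h1τ
  set SY : ℝ := ∑ y ∈ TY P, WYt P σ y * Real.log (WYt P σ y) with hSY_def
  set MM : ℝ := ∑ y ∈ TY P, WYt P σ y * Real.log (AA P τ y) with hMM_def
  have houter_rw :
      ∑ y ∈ TY P, WYt P σ y * Real.log (AA P τ y ^ (1 / (1 + τ)) / WYt P σ y)
        = (1 / (1 + τ)) * MM - SY := by
    have : ∀ y ∈ TY P, WYt P σ y * Real.log (AA P τ y ^ (1 / (1 + τ)) / WYt P σ y)
        = (1 / (1 + τ)) * (WYt P σ y * Real.log (AA P τ y))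
          - WYt P σ y * Real.log (WYt P σ y) := by
      intro y hy
      rw [Real.log_div (hpY_pos y hy).ne' (hqY_pos y hy).ne',
        Real.log_rpow (AA_pos hP0 (hmemTY.1 hy))]
      ring
    rw [Finset.sum_congr rfl this, Finset.sum_sub_distrib, ← Finset.mul_sum,
      hMM_def, hSY_def]
  have houter_le : (1 / (1 + τ)) * MM - SY ≤ Real.log (FF P τ) := by
    rw [← houter_rw, ← hsumFτ]
    exact gibbs_le hqY_pos hpY_pos (sum_WYt hP0 hP1 h1σ)
  -- weighted sum of inner inequalities
  set SW : ℝ := ∑ p ∈ TS P, Wt P σ p * Real.log (P p) with hSW_def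
  have hterm_le : ∀ y ∈ TY P,
      WYt P σ y * ((τ - σ) * QL y + Real.log (AA P σ y))
        ≤ WYt P σ y * Real.log (AA P τ y) := fun y hy =>
    mul_le_mul_of_nonneg_left (hinner_le y hy) (hqY_pos y hy).le
  have hsum1_le : ∑ y ∈ TY P, WYt P σ y * ((τ - σ) * QL y + Real.log (AA P σ y)) ≤ MM :=
    Finset.sum_le_sum hterm_le
  -- evaluate the weighted sum
  have hWQ : ∑ y ∈ TY P, WYt P σ y * QL y = SW := by
    rw [hSW_def, sum_T_split hP0]
    refine Finset.sum_congr rfl (fun y hy => ?_)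
    simp only [hQL_def]
    rw [Finset.mul_sum]
    refine Finset.sum_congr rfl (fun x hx => ?_)
    rw [Wt_eq hP0 (hmemTY.1 hy), hq_def]
    ring
  have hlogAA : ∀ y ∈ TY P, Real.log (AA P σ y)
      = (1 + σ) * (Real.log (WYt P σ y) + Real.log (FF P σ)) := by
    intro y hy
    have hA : 0 < AA P σ y := AA_pos hP0 (hmemTY.1 hy)
    have h1 : Real.log (AA P σ y ^ (1 / (1 + σ))) = (1 / (1 + σ)) * Real.log (AA P σ y) :=
      Real.log_rpow hA _
    have h2 : AA P σ y ^ (1 / (1 + σ)) = WYt P σ y * FF P σ := by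
      rw [WYt]; field_simp
    rw [h2, Real.log_mul (hqY_pos y hy).ne' hFσ.ne'] at h1
    field_simp at h1
    linarith
  have hsum1_eval : ∑ y ∈ TY P, WYt P σ y * ((τ - σ) * QL y + Real.log (AA P σ y))
      = (τ - σ) * SW + (1 + σ) * SY + (1 + σ) * Real.log (FF P σ) := by
    have : ∀ y ∈ TY P, WYt P σ y * ((τ - σ) * QL y + Real.log (AA P σ y))
        = (τ - σ) * (WYt P σ y * QL y)
          + (1 + σ) * (WYt P σ y * Real.log (WYt P σ y))
          + (1 + σ) * Real.log (FF P σ) * WYt P σ y := by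
      intro y hy
      rw [hlogAA y hy]
      ring
    rw [Finset.sum_congr rfl this, Finset.sum_add_distrib, Finset.sum_add_distrib,
      ← Finset.mul_sum, ← Finset.mul_sum, ← Finset.mul_sum, hWQ,
      sum_WYt hP0 hP1 h1σ, ← hSY_def]
    ring
  -- the chain
  have hchain1 : (τ - σ) * SW + (1 + σ) * SY + (1 + σ) * Real.log (FF P σ) ≤ MM := by
    rw [← hsum1_eval]; exact hsum1_le
  have hchain2 : MM ≤ (1 + τ) * Real.log (FF P τ) + (1 + τ) * SY := by
    have h := mul_le_mul_of_nonneg_left houter_le h1τ.le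
    have hmm : (1 + τ) * ((1 / (1 + τ)) * MM - SY) = MM - (1 + τ) * SY := by
      field_simp
    rw [hmm] at h
    linarith
  have hslope : slopeR P σ = -SW + SY := rfl
  have hle : thetaCondRenyiUp P τ ≤ thetaCondRenyiUp P σ + (τ - σ) * slopeR P σ := by
    rw [theta_eq, theta_eq, hslope]
    have h := hchain1.trans hchain2
    ring_nf at h ⊢
    linarith [h]
  refine ⟨hle, fun heq => ?_⟩
  -- equality analysis
  rw [theta_eq, theta_eq, hslope] at heq
  have hAB : (τ - σ) * SW + (1 + σ) * SY + (1 + σ) * Real.log (FF P σ)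
      = (1 + τ) * Real.log (FF P τ) + (1 + τ) * SY := by
    linear_combination heq
  have hBle : (1 + τ) * Real.log (FF P τ) + (1 + τ) * SY ≤ MM := by
    rw [← hAB]; exact hchain1
  have hMMeq : MM = (1 + τ) * Real.log (FF P τ) + (1 + τ) * SY :=
    le_antisymm hchain2 hBle
  have hsum1_eq : ∑ y ∈ TY P, WYt P σ y * ((τ - σ) * QL y + Real.log (AA P σ y)) = MM := by
    rw [hsum1_eval, hAB]
    exact hMMeq.symm
  constructor
  · -- inner equalities
    intro x y hxy
    have hy : 0 < margY P y := marg_pos hP0 hxy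
    have hyT : y ∈ TY P := hmemTY.2 hy
    have htermeq : ∀ y' ∈ TY P,
        WYt P σ y' * ((τ - σ) * QL y' + Real.log (AA P σ y'))
          = WYt P σ y' * Real.log (AA P τ y') := by
      rw [← Finset.sum_eq_sum_iff_of_le hterm_le]
      rw [hsum1_eq, hMM_def]
    have h1 : (τ - σ) * QL y + Real.log (AA P σ y) = Real.log (AA P τ y) :=
      mul_left_cancel₀ (hqY_pos y hyT).ne' (htermeq y hyT)
    have h2 : ∑ x ∈ SX P y, q y x * Real.log (P (x, y) ^ (1 + τ) / q y x)
        = Real.log (∑ x ∈ SX P y, P (x, y) ^ (1 + τ)) := by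
      rw [hinner_rw y hyT, hsumpτ y, h1]
    have h3 := gibbs_eq (hq_pos y hyT) (hp_pos y) (hq_sum y hyT) h2 x (hmemSX.2 hxy)
    rw [hsumpτ y] at h3
    rw [h3]
  · -- outer equalities
    intro y hy
    have hyT : y ∈ TY P := hmemTY.2 hy
    have h2 : ∑ y ∈ TY P, WYt P σ y * Real.log (AA P τ y ^ (1 / (1 + τ)) / WYt P σ y)
        = Real.log (∑ y ∈ TY P, AA P τ y ^ (1 / (1 + τ))) := by
      have hfix : (1 / (1 + τ)) * MM - SY = Real.log (FF P τ) := by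
        rw [hMMeq]; field_simp; ring
      rw [houter_rw, hsumFτ]
      exact hfix
    have h3 := gibbs_eq hqY_pos hpY_pos (sum_WYt hP0 hP1 h1σ) h2 y hyT
    rw [hsumFτ] at h3
    exact h3

end Supp

section Ent
set_option linter.unusedSectionVars false
set_option maxHeartbeats 1000000

open Real Finset

variable {𝒳 𝒴 : Type*} [Fintype 𝒳] [Fintype 𝒴] {P : 𝒳 × 𝒴 → ℝ}

lemma marg_nonneg (hP0 : ∀ p, 0 ≤ P p) (y : 𝒴) : 0 ≤ margY P y :=
  Finset.sum_nonneg (fun x _ => hP0 _)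

lemma ifsum (g : 𝒳 × 𝒴 → ℝ) :
    (∑ x : 𝒳, ∑ y : 𝒴, if 0 < P (x, y) then g (x, y) else 0) = ∑ p ∈ TS P, g p := by
  rw [show (∑ p ∈ TS P, g p) = ∑ p : 𝒳 × 𝒴, if 0 < P p then g p else 0 from
    Finset.sum_filter _ _, Fintype.sum_prod_type]

lemma sum_TS_P (hP0 : ∀ p, 0 ≤ P p) (hP1 : ∑ p : 𝒳 × 𝒴, P p = 1) :
    ∑ p ∈ TS P, P p = 1 := by
  rw [← hP1]
  exact Finset.sum_subset (Finset.filter_subset _ _) (fun p _ hp => P_eq_zero hP0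
    (fun hc => hp (Finset.mem_filter.2 ⟨Finset.mem_univ _, hc⟩)))

lemma condEnt_eq : condEnt P = -∑ p ∈ TS P, P p * Real.log (P p / margY P p.2) := by
  rw [condEnt, ifsum (fun p => P p * Real.log (P p / margY P p.2))]

lemma condVarEnt_eq : condVarEnt P =
    (∑ p ∈ TS P, P p * (Real.log (P p / margY P p.2)) ^ 2) - (condEnt P) ^ 2 := by
  rw [condVarEnt, ifsum (fun p => P p * (Real.log (P p / margY P p.2)) ^ 2)]

lemma V_nonneg (hP0 : ∀ p, 0 ≤ P p) (hP1 : ∑ p : 𝒳 × 𝒴, P p = 1) :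
    0 ≤ condVarEnt P := by
  have key := Finset.sum_mul_sq_le_sq_mul_sq (TS P) (fun p => Real.sqrt (P p))
    (fun p => Real.sqrt (P p) * Real.log (P p / margY P p.2))
  have h1 : ∀ p ∈ TS P, Real.sqrt (P p) * (Real.sqrt (P p) * Real.log (P p / margY P p.2))
      = P p * Real.log (P p / margY P p.2) := by
    intro p hp
    rw [← mul_assoc, Real.mul_self_sqrt (hP0 p)]
  have h2 : ∀ p ∈ TS P, (Real.sqrt (P p)) ^ 2 = P p := fun p _ => Real.sq_sqrt (hP0 p)
  have h3 : ∀ p ∈ TS P, (Real.sqrt (P p) * Real.log (P p / margY P p.2)) ^ 2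
      = P p * (Real.log (P p / margY P p.2)) ^ 2 := by
    intro p hp
    rw [mul_pow, Real.sq_sqrt (hP0 p)]
  rw [Finset.sum_congr rfl h1, Finset.sum_congr rfl h2, Finset.sum_congr rfl h3,
    sum_TS_P hP0 hP1, one_mul] at key
  rw [condVarEnt_eq, condEnt_eq, neg_pow]
  simp only [neg_neg, one_mul, neg_one_sq]
  linarith [key]

lemma const_of_V0 (hP0 : ∀ p, 0 ≤ P p) (hP1 : ∑ p : 𝒳 × 𝒴, P p = 1)
    (hV : condVarEnt P = 0) :
    ∀ p ∈ TS P, Real.log (P p / margY P p.2) = -condEnt P := by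
  have hsum : ∑ p ∈ TS P, P p * (Real.log (P p / margY P p.2) + condEnt P) ^ 2 = 0 := by
    have hexp : ∀ p ∈ TS P, P p * (Real.log (P p / margY P p.2) + condEnt P) ^ 2
        = P p * (Real.log (P p / margY P p.2)) ^ 2
          + (2 * condEnt P) * (P p * Real.log (P p / margY P p.2))
          + (condEnt P) ^ 2 * P p := by
      intro p hp; ring
    rw [Finset.sum_congr rfl hexp, Finset.sum_add_distrib, Finset.sum_add_distrib,
      ← Finset.mul_sum, ← Finset.mul_sum, sum_TS_P hP0 hP1]
    have hH : ∑ p ∈ TS P, P p * Real.log (P p / margY P p.2) = -condEnt P := by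
      rw [condEnt_eq]; ring
    rw [hH]
    have := condVarEnt_eq (P := P)
    rw [hV] at this
    nlinarith [this]
  intro p hp
  have hterm := (Finset.sum_eq_zero_iff_of_nonneg
    (fun p _ => mul_nonneg (hP0 p) (sq_nonneg _))).1 hsum p hp
  have hPp : 0 < P p := (Finset.mem_filter.1 hp).2
  have h2 : (Real.log (P p / margY P p.2) + condEnt P) ^ 2 = 0 := by
    rcases mul_eq_zero.1 hterm with h | h
    · exact absurd h hPp.ne'
    · exact h
  have := pow_eq_zero_iff (n := 2) (by norm_num) |>.1 h2
  linarith [this]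

lemma V0_of_const {K : ℝ} (hP0 : ∀ p, 0 ≤ P p) (hP1 : ∑ p : 𝒳 × 𝒴, P p = 1)
    (hK : ∀ p ∈ TS P, Real.log (P p / margY P p.2) = K) : condVarEnt P = 0 := by
  have h1 : condEnt P = -K := by
    rw [condEnt_eq, Finset.sum_congr rfl (fun p hp => by rw [hK p hp]),
      ← Finset.sum_mul, sum_TS_P hP0 hP1, one_mul]
  have h2 : ∑ p ∈ TS P, P p * (Real.log (P p / margY P p.2)) ^ 2 = K ^ 2 := by
    rw [Finset.sum_congr rfl (fun p hp => by rw [hK p hp]),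
      ← Finset.sum_mul, sum_TS_P hP0 hP1, one_mul]
  rw [condVarEnt_eq, h1, h2]
  ring

lemma rpow_collapse {n c a : ℝ} (hn : 0 ≤ n) (hc : 0 < c) (ha : a ≠ 0) :
    (n * c ^ a) ^ (1 / a) = n ^ (1 / a) * c := by
  rw [Real.mul_rpow hn (Real.rpow_nonneg hc.le _), ← Real.rpow_mul hc.le,
    mul_one_div, div_self ha, Real.rpow_one]

lemma fiber_const (hP0 : ∀ p, 0 ≤ P p) {σ τ : ℝ} (hστ : τ ≠ σ)
    {x : 𝒳} {y : 𝒴} (hxy : 0 < P (x, y))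
    (Hi : ∀ x y, 0 < P (x, y) →
      P (x, y) ^ (1 + τ) = P (x, y) ^ (1 + σ) / AA P σ y * AA P τ y) :
    ∀ x', 0 < P (x', y) → P (x', y) = P (x, y) := by
  intro x' hx'
  have hy : 0 < margY P y := marg_pos hP0 hxy
  have hAσ : 0 < AA P σ y := AA_pos hP0 hy
  have hAτ : 0 < AA P τ y := AA_pos hP0 hy
  have key : ∀ x'', 0 < P (x'', y) → P (x'', y) ^ (τ - σ) = AA P τ y / AA P σ y := by
    intro x'' hx''
    rw [show τ - σ = (1 + τ) - (1 + σ) by ring, Real.rpow_sub hx'', Hi x'' y hx'']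
    field_simp
  have h1 : P (x', y) ^ (τ - σ) = P (x, y) ^ (τ - σ) := by
    rw [key x' hx', key x hxy]
  have h2 : (τ - σ) * Real.log (P (x', y)) = (τ - σ) * Real.log (P (x, y)) := by
    rw [← Real.log_rpow hx', ← Real.log_rpow hxy, h1]
  have h3 : Real.log (P (x', y)) = Real.log (P (x, y)) :=
    mul_left_cancel₀ (sub_ne_zero.2 hστ) h2
  exact Real.log_injOn_pos (Set.mem_Ioi.2 hx') (Set.mem_Ioi.2 hxy) h3

lemma struct_const (hP0 : ∀ p, 0 ≤ P p) (hP1 : ∑ p : 𝒳 × 𝒴, P p = 1)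
    {σ τ : ℝ} (hσ : -1 < σ) (hτ : -1 < τ) (hστ : τ ≠ σ)
    (Hi : ∀ x y, 0 < P (x, y) →
      P (x, y) ^ (1 + τ) = P (x, y) ^ (1 + σ) / AA P σ y * AA P τ y)
    (Hii : ∀ y, 0 < margY P y → AA P τ y ^ (1 / (1 + τ)) = WYt P σ y * FF P τ) :
    ∃ K, ∀ p ∈ TS P, Real.log (P p / margY P p.2) = K := by
  have h1σ : (0:ℝ) < 1 + σ := by linarith
  have h1τ : (0:ℝ) < 1 + τ := by linarith
  have hFσ : 0 < FF P σ := FF_pos hP0 hP1 h1σ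
  have hFτ : 0 < FF P τ := FF_pos hP0 hP1 h1τ
  have he : 1 / (1 + τ) - 1 / (1 + σ) ≠ 0 := by
    intro h
    apply hστ
    field_simp at h
    linarith
  refine ⟨-((Real.log (FF P τ) - Real.log (FF P σ)) / (1 / (1 + τ) - 1 / (1 + σ))), ?_⟩
  rintro ⟨x, y⟩ hp
  have hxy : 0 < P (x, y) := (Finset.mem_filter.1 hp).2
  have hy : 0 < margY P y := marg_pos hP0 hxy
  have hconst := fiber_const hP0 hστ hxy Hi
  set c := P (x, y) with hc_def
  set n := (SX P y).card with hn_def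
  have hc : 0 < c := hxy
  have hnpos : 0 < n := Finset.card_pos.2 ⟨x, Finset.mem_filter.2 ⟨Finset.mem_univ _, hxy⟩⟩
  have hnR : (0:ℝ) < (n:ℝ) := by exact_mod_cast hnpos
  have hmarg : margY P y = n * c := by
    rw [margY, ← Finset.sum_subset (Finset.filter_subset (fun x => 0 < P (x, y)) univ)
      (fun x' _ hx' => P_eq_zero hP0 (fun hcon => hx' (Finset.mem_filter.2
        ⟨Finset.mem_univ _, hcon⟩)))]
    rw [Finset.sum_congr rfl (fun x' hx' => hconst x' (Finset.mem_filter.1 hx').2),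
      Finset.sum_const, nsmul_eq_mul]
    simp only [hn_def, SX]
  have hAA : ∀ θ' : ℝ, 0 < 1 + θ' → AA P θ' y = n * c ^ (1 + θ') := by
    intro θ' hθ'
    rw [← AA_sum_filter hP0 hθ' y,
      Finset.sum_congr rfl (fun x' hx' => by
        rw [hconst x' ((Finset.mem_filter.1 hx').2)]),
      Finset.sum_const, nsmul_eq_mul]
  have h4 := Hii y hy
  simp only [WYt] at h4
  rw [hAA τ h1τ, hAA σ h1σ] at h4
  rw [rpow_collapse hnR.le hc h1τ.ne', rpow_collapse hnR.le hc h1σ.ne'] at h4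
  -- h4 : n^{1/(1+τ)} * c = (n^{1/(1+σ)} * c) / FFσ * FFτ
  have hcc : ((n:ℝ) ^ (1 / (1+τ)) * c) * FF P σ = ((n:ℝ) ^ (1 / (1+σ)) * c) * FF P τ := by
    rw [h4]
    field_simp
  have h5 : (n:ℝ) ^ (1 / (1 + τ) - 1 / (1 + σ)) = FF P τ / FF P σ := by
    rw [Real.rpow_sub hnR]
    rw [div_eq_div_iff (by positivity) hFσ.ne']
    refine mul_right_cancel₀ hc.ne' ?_
    linear_combination hcc
  have h6 : (1 / (1 + τ) - 1 / (1 + σ)) * Real.log n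
      = Real.log (FF P τ) - Real.log (FF P σ) := by
    rw [← Real.log_rpow hnR, h5, Real.log_div hFτ.ne' hFσ.ne']
  have h7 : Real.log ((n:ℝ)) = (Real.log (FF P τ) - Real.log (FF P σ))
      / (1 / (1 + τ) - 1 / (1 + σ)) := by
    rw [eq_div_iff he]
    linarith [h6]
  show Real.log (c / margY P y) = _
  rw [hmarg, Real.log_div hc.ne' (by positivity),
    Real.log_mul (by positivity) hc.ne', h7]
  ring

end Ent

section Fin
set_option linter.unusedSectionVars false
set_option maxHeartbeats 1000000

open Real Finset

variable {𝒳 𝒴 : Type*} [Fintype 𝒳] [Fintype 𝒴] {P : 𝒳 × 𝒴 → ℝ}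

lemma theta_of_const (hP0 : ∀ p, 0 ≤ P p) (hP1 : ∑ p : 𝒳 × 𝒴, P p = 1) {K : ℝ}
    (hK : ∀ p ∈ TS P, Real.log (P p / margY P p.2) = K) {θ : ℝ} (hθ : -1 < θ) :
    thetaCondRenyiUp P θ = -(K * θ) := by
  have h1θ : (0:ℝ) < 1 + θ := by linarith
  have hexpK : (0:ℝ) < Real.exp K := Real.exp_pos K
  have hPeq : ∀ x y, 0 < P (x, y) → P (x, y) = Real.exp K * margY P y := by
    intro x y hxy
    have hy : 0 < margY P y := marg_pos hP0 hxy
    have h1 := hK (x, y) (Finset.mem_filter.2 ⟨Finset.mem_univ _, hxy⟩)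
    have h2 : P (x, y) / margY P y = Real.exp K := by
      rw [← h1, Real.exp_log (div_pos hxy hy)]
    rw [← h2]; field_simp
  have hsumSX : ∀ y, ∑ x ∈ SX P y, P (x, y) = margY P y := fun y =>
    Finset.sum_subset (Finset.filter_subset _ _) (fun x' _ hx' => P_eq_zero hP0
      (fun hc => hx' (Finset.mem_filter.2 ⟨Finset.mem_univ _, hc⟩)))
  have hn1 : ∀ y, 0 < margY P y → ((SX P y).card : ℝ) * Real.exp K = 1 := by
    intro y hy
    have hcong : ∀ x ∈ SX P y, P (x, y) = Real.exp K * margY P y := fun x hx =>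
      hPeq x y ((Finset.mem_filter.1 hx).2)
    have h3 : margY P y = ((SX P y).card : ℝ) * (Real.exp K * margY P y) := by
      calc margY P y = ∑ x ∈ SX P y, P (x, y) := (hsumSX y).symm
        _ = ∑ x ∈ SX P y, Real.exp K * margY P y := Finset.sum_congr rfl hcong
        _ = ((SX P y).card : ℝ) * (Real.exp K * margY P y) := by
            rw [Finset.sum_const, nsmul_eq_mul]
    have h4 : (((SX P y).card : ℝ) * Real.exp K) * margY P y = 1 * margY P y := by
      linear_combination -h3
    exact mul_right_cancel₀ hy.ne' h4
  have hcard : ∀ y, 0 < margY P y → ((SX P y).card : ℝ) = Real.exp (-K) := by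
    intro y hy
    rw [Real.exp_neg, inv_eq_one_div, eq_div_iff (Real.exp_ne_zero K)]
    exact hn1 y hy
  have hAA2 : ∀ y, 0 < margY P y →
      AA P θ y ^ (1 / (1 + θ)) = Real.exp (-K * (1 / (1 + θ)) + K) * margY P y := by
    intro y hy
    have hb : 0 < Real.exp K * margY P y := by positivity
    have hAAy : AA P θ y = ((SX P y).card : ℝ) * (Real.exp K * margY P y) ^ (1 + θ) := by
      rw [← AA_sum_filter hP0 h1θ y, Finset.sum_congr rfl (fun x hx => by
        rw [hPeq x y ((Finset.mem_filter.1 hx).2)]), Finset.sum_const, nsmul_eq_mul]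
    rw [hAAy, rpow_collapse (by positivity) hb h1θ.ne', hcard y hy,
      Real.rpow_def_of_pos (Real.exp_pos _), Real.log_exp, Real.exp_add]
    ring
  have hTY1 : ∑ y ∈ TY P, margY P y = 1 := by
    have h5 : ∑ y ∈ TY P, margY P y = ∑ y : 𝒴, margY P y :=
      Finset.sum_subset (Finset.filter_subset _ _) (fun y _ hy =>
        le_antisymm (not_lt.1 (fun hc => hy (Finset.mem_filter.2 ⟨Finset.mem_univ _, hc⟩)))
          (marg_nonneg hP0 y))
    rw [h5, marg_sum, hP1]
  have hFF : FF P θ = Real.exp (-K * (1 / (1 + θ)) + K) := by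
    have hcong : ∀ y ∈ TY P, AA P θ y ^ (1 / (1 + θ))
        = Real.exp (-K * (1 / (1 + θ)) + K) * margY P y := fun y hy =>
      hAA2 y ((Finset.mem_filter.1 hy).2)
    rw [← FF_sum_filter hP0 h1θ, Finset.sum_congr rfl hcong, ← Finset.mul_sum, hTY1, mul_one]
  rw [theta_eq, hFF, Real.log_exp]
  field_simp
  ring

private theorem thetaCondRenyiUp_concave_iff_aux {𝒳 𝒴 : Type*} [Fintype 𝒳] [Fintype 𝒴]
    (P : 𝒳 × 𝒴 → ℝ) (hP0 : ∀ p, 0 ≤ P p) (hP1 : ∑ p : 𝒳 × 𝒴, P p = 1) :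
    ConcaveOn ℝ (Set.Ioi (-1 : ℝ)) (fun θ => thetaCondRenyiUp P θ)
    ∧ (StrictConcaveOn ℝ (Set.Ioi (-1 : ℝ)) (fun θ => thetaCondRenyiUp P θ)
        ↔ 0 < condVarEnt P) := by
  have hcomb : ∀ (a b wa wb : ℝ), wa + wb = 1 →
      wa * (thetaCondRenyiUp P (wa * a + wb * b)
          + (a - (wa * a + wb * b)) * slopeR P (wa * a + wb * b))
      + wb * (thetaCondRenyiUp P (wa * a + wb * b)
          + (b - (wa * a + wb * b)) * slopeR P (wa * a + wb * b))
      = thetaCondRenyiUp P (wa * a + wb * b) := by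
    intro a b wa wb hw
    linear_combination (thetaCondRenyiUp P (wa * a + wb * b)
      - slopeR P (wa * a + wb * b) * (wa * a + wb * b)) * hw
  have hconc : ConcaveOn ℝ (Set.Ioi (-1 : ℝ)) (fun θ => thetaCondRenyiUp P θ) := by
    refine ⟨convex_Ioi _, fun a ha b hb wa wb hwa hwb hw => ?_⟩
    have hm : wa • a + wb • b ∈ Set.Ioi (-1:ℝ) := convex_Ioi (-1) ha hb hwa hwb hw
    simp only [smul_eq_mul] at hm ⊢
    have hmI : (-1:ℝ) < wa * a + wb * b := hm
    have ha' := (support_line hP0 hP1 hmI ha).1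
    have hb' := (support_line hP0 hP1 hmI hb).1
    calc wa * thetaCondRenyiUp P a + wb * thetaCondRenyiUp P b
        ≤ wa * (thetaCondRenyiUp P (wa * a + wb * b)
            + (a - (wa * a + wb * b)) * slopeR P (wa * a + wb * b))
          + wb * (thetaCondRenyiUp P (wa * a + wb * b)
            + (b - (wa * a + wb * b)) * slopeR P (wa * a + wb * b)) :=
          add_le_add (mul_le_mul_of_nonneg_left ha' hwa)
            (mul_le_mul_of_nonneg_left hb' hwb)
      _ = thetaCondRenyiUp P (wa * a + wb * b) := hcomb a b wa wb hw
  refine ⟨hconc, ?_, ?_⟩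
  · -- strict → 0 < V
    intro hstrict
    by_contra hV
    have hV0 : condVarEnt P = 0 := le_antisymm (not_lt.1 hV) (V_nonneg hP0 hP1)
    have hK := const_of_V0 hP0 hP1 hV0
    have h02 := hstrict.2 (show (0:ℝ) ∈ Set.Ioi (-1:ℝ) by norm_num)
      (show (2:ℝ) ∈ Set.Ioi (-1:ℝ) by norm_num) (by norm_num)
      (show (0:ℝ) < 1/2 by norm_num) (show (0:ℝ) < 1/2 by norm_num) (by norm_num)
    simp only [smul_eq_mul] at h02
    have e1 : (1/2 : ℝ) * 0 + (1/2 : ℝ) * 2 = 1 := by norm_num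
    rw [e1] at h02
    rw [theta_of_const hP0 hP1 hK (show (-1:ℝ) < 0 by norm_num),
      theta_of_const hP0 hP1 hK (show (-1:ℝ) < 2 by norm_num),
      theta_of_const hP0 hP1 hK (show (-1:ℝ) < 1 by norm_num)] at h02
    linarith
  · -- 0 < V → strict
    intro hV
    refine ⟨convex_Ioi _, fun a ha b hb hab wa wb hwa hwb hw => ?_⟩
    have hm : wa • a + wb • b ∈ Set.Ioi (-1:ℝ) := convex_Ioi (-1) ha hb hwa.le hwb.le hw
    simp only [smul_eq_mul] at hm ⊢
    have hmI : (-1:ℝ) < wa * a + wb * b := hm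
    have ha' := (support_line hP0 hP1 hmI ha).1
    have hb' := (support_line hP0 hP1 hmI hb).1
    rcases eq_or_lt_of_le ha' with hEq | hLt
    · -- equality of the supporting line at `a`: contradiction with V > 0
      exfalso
      have hane : a ≠ wa * a + wb * b := by
        intro hcon
        apply hab
        have : wb * b = wb * a := by nlinarith [hcon, hw]
        have := mul_left_cancel₀ hwb.ne' this
        linarith
      obtain ⟨Hi, Hii⟩ := (support_line hP0 hP1 hmI ha).2 hEq
      obtain ⟨K, hKc⟩ := struct_const hP0 hP1 hmI ha hane Hi Hii
      have := V0_of_const hP0 hP1 hKc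
      linarith
    · calc wa * thetaCondRenyiUp P a + wb * thetaCondRenyiUp P b
          < wa * (thetaCondRenyiUp P (wa * a + wb * b)
              + (a - (wa * a + wb * b)) * slopeR P (wa * a + wb * b))
            + wb * (thetaCondRenyiUp P (wa * a + wb * b)
              + (b - (wa * a + wb * b)) * slopeR P (wa * a + wb * b)) :=
            add_lt_add_of_lt_of_le (mul_lt_mul_of_pos_left hLt hwa)
              (mul_le_mul_of_nonneg_left hb' hwb.le)
        _ = thetaCondRenyiUp P (wa * a + wb * b) := hcomb a b wa wb hw

end Fin

theorem thetaCondRenyiUp_concave_iff {𝒳 𝒴 : Type*} [Fintype 𝒳] [Fintype 𝒴]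
    (P : 𝒳 × 𝒴 → ℝ) (hP0 : ∀ p, 0 ≤ P p) (hP1 : ∑ p : 𝒳 × 𝒴, P p = 1) :
    ConcaveOn ℝ (Set.Ioi (-1 : ℝ)) (fun θ => thetaCondRenyiUp P θ)
    ∧ (StrictConcaveOn ℝ (Set.Ioi (-1 : ℝ)) (fun θ => thetaCondRenyiUp P θ)
        ↔ 0 < condVarEnt P) := by
  exact thetaCondRenyiUp_concave_iff_aux P hP0 hP1
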